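/- For any real γ > 1 and any z, Δ ∈ ℝ, it holds that ln( (1 + |z+Δ|^γ)/(1 + |z|^γ) ) ≤ |Δ| · (γ-1)^{(γ-1)/γ}. Consequently, if |Δ| ≤ ε / (2 (γ-1)^{(γ-1)/γ}) for some ε > 0, then ln( (1 + |z+Δ|^γ)/(1 + |z|^γ) ) ≤ ε/2. -/

import Mathlib

open Real Set

/-- Pointwise bound: `γ * s^((γ-1)/γ) ≤ (γ-1)^((γ-1)/γ) * (1 + s)` for `s ≥ 0`. -/
lemma stmt3_aux_pointwise (γ : ℝ) (hγ : 1 < γ) {s : ℝ} (hs : 0 ≤ s) :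
    γ * s ^ ((γ - 1) / γ) ≤ (γ - 1) ^ ((γ - 1) / γ) * (1 + s) := by
  have hγ0 : (0:ℝ) < γ := lt_trans one_pos hγ
  have hγ1 : (0:ℝ) < γ - 1 := by linarith
  set α : ℝ := (γ - 1) / γ with hα
  have hα0 : 0 ≤ α := div_nonneg hγ1.le hγ0.le
  have key := Real.geom_mean_le_arith_mean2_weighted
    (w₁ := 1/γ) (w₂ := α) (p₁ := 1) (p₂ := s / (γ - 1))
    (by positivity) hα0 zero_le_one (div_nonneg hs hγ1.le)
    (by rw [hα]; field_simp; try ring)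
  rw [Real.one_rpow, one_mul, Real.div_rpow hs hγ1.le] at key
  have hL : (0:ℝ) < (γ - 1) ^ α := Real.rpow_pos_of_pos hγ1 α
  have h2 : α * (s / (γ - 1)) = s / γ := by
    rw [hα]; field_simp; try ring
  rw [h2] at key
  have : s ^ α ≤ (γ - 1) ^ α * (1/γ * 1 + s / γ) := by
    rw [← div_le_iff₀' hL]; exact key
  calc γ * s ^ α ≤ γ * ((γ - 1) ^ α * (1/γ * 1 + s / γ)) := by
        exact mul_le_mul_of_nonneg_left this hγ0.le
    _ = (γ - 1) ^ α * (1 + s) := by field_simp; try ring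

/-- Lipschitz-type bound: for `0 ≤ a ≤ b`,
`log (1 + b^γ) - log (1 + a^γ) ≤ (γ-1)^((γ-1)/γ) * (b - a)`. -/
lemma stmt3_aux_lip (γ : ℝ) (hγ : 1 < γ) {a b : ℝ} (ha : 0 ≤ a) (hab : a ≤ b) :
    Real.log (1 + b ^ γ) - Real.log (1 + a ^ γ) ≤ (γ - 1) ^ ((γ - 1) / γ) * (b - a) := by
  have hγ0 : (0:ℝ) < γ := lt_trans one_pos hγ
  have hγ1 : (0:ℝ) < γ - 1 := by linarith
  set L : ℝ := (γ - 1) ^ ((γ - 1) / γ) with hL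
  set g : ℝ → ℝ := fun t => L * t - Real.log (1 + t ^ γ) with hg
  have hderiv : ∀ t : ℝ, 0 ≤ t →
      HasDerivAt g (L - γ * t ^ (γ - 1) / (1 + t ^ γ)) t := by
    intro t ht
    have h1 : HasDerivAt (fun x : ℝ => x ^ γ) (γ * t ^ (γ - 1)) t :=
      Real.hasDerivAt_rpow_const (Or.inr hγ.le)
    have hpos : (0:ℝ) < 1 + t ^ γ := by
      have : (0:ℝ) ≤ t ^ γ := Real.rpow_nonneg ht γ
      linarith
    have h2 : HasDerivAt (fun x : ℝ => Real.log (1 + x ^ γ))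
        (γ * t ^ (γ - 1) / (1 + t ^ γ)) t := by
      have := ((hasDerivAt_const t (1:ℝ)).add h1).log (ne_of_gt hpos)
      simpa using this
    have h3 := ((hasDerivAt_id t).const_mul L).sub h2
    simp at h3
    exact h3
  have hmono : MonotoneOn g (Ici (0:ℝ)) := by
    apply monotoneOn_of_deriv_nonneg (convex_Ici 0)
    · exact fun t ht => (hderiv t ht).continuousAt.continuousWithinAt
    · intro t ht
      rw [interior_Ici] at ht
      exact ((hderiv t (le_of_lt ht)).differentiableAt).differentiableWithinAt
    · intro t ht
      rw [interior_Ici] at ht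
      rw [(hderiv t (le_of_lt ht)).deriv]
      have hpos : (0:ℝ) < 1 + t ^ γ := by
        have : (0:ℝ) ≤ t ^ γ := Real.rpow_nonneg (le_of_lt ht) γ
        linarith
      rw [sub_nonneg, div_le_iff₀ hpos]
      have htγ : t ^ (γ - 1) = (t ^ γ) ^ ((γ - 1) / γ) := by
        rw [← Real.rpow_mul (le_of_lt ht)]
        congr 1
        field_simp
      rw [htγ]
      have := stmt3_aux_pointwise γ hγ (Real.rpow_nonneg (le_of_lt ht) γ)
      linarith [this]
  have := hmono (mem_Ici.mpr ha) (mem_Ici.mpr (ha.trans hab)) hab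
  simp only [hg] at this
  linarith

theorem stmt3 (γ z Δ : ℝ) (hγ : 1 < γ) :
    Real.log ((1 + |z + Δ| ^ γ) / (1 + |z| ^ γ)) ≤ |Δ| * (γ - 1) ^ ((γ - 1) / γ) ∧
    ∀ ε : ℝ, 0 < ε → |Δ| ≤ ε / (2 * (γ - 1) ^ ((γ - 1) / γ)) →
      Real.log ((1 + |z + Δ| ^ γ) / (1 + |z| ^ γ)) ≤ ε / 2 := by
  have hγ1 : (0:ℝ) < γ - 1 := by linarith
  set L : ℝ := (γ - 1) ^ ((γ - 1) / γ) with hL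
  have hLpos : 0 < L := Real.rpow_pos_of_pos hγ1 _
  set a : ℝ := |z| with haa
  set b : ℝ := |z + Δ| with hbb
  have ha : 0 ≤ a := abs_nonneg _
  have hb : 0 ≤ b := abs_nonneg _
  have hA : (0:ℝ) < 1 + a ^ γ := by
    have : (0:ℝ) ≤ a ^ γ := Real.rpow_nonneg ha γ; linarith
  have hB : (0:ℝ) < 1 + b ^ γ := by
    have : (0:ℝ) ≤ b ^ γ := Real.rpow_nonneg hb γ; linarith
  have hlogdiv : Real.log ((1 + b ^ γ) / (1 + a ^ γ))
      = Real.log (1 + b ^ γ) - Real.log (1 + a ^ γ) :=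
    Real.log_div (ne_of_gt hB) (ne_of_gt hA)
  have hdiff : b - a ≤ |Δ| := by
    have := abs_sub_abs_le_abs_sub (z + Δ) z
    simpa [haa, hbb] using this
  have hmain : Real.log ((1 + b ^ γ) / (1 + a ^ γ)) ≤ |Δ| * L := by
    rcases le_total b a with hba | hab
    · have hle : b ^ γ ≤ a ^ γ :=
        Real.rpow_le_rpow hb hba (le_of_lt (lt_trans one_pos hγ))
      have h0 : Real.log ((1 + b ^ γ) / (1 + a ^ γ)) ≤ 0 := by
        apply Real.log_nonpos (by positivity)
        rw [div_le_one hA]; linarith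
      exact h0.trans (by positivity)
    · rw [hlogdiv]
      calc Real.log (1 + b ^ γ) - Real.log (1 + a ^ γ) ≤ L * (b - a) :=
            stmt3_aux_lip γ hγ ha hab
        _ ≤ L * |Δ| := mul_le_mul_of_nonneg_left hdiff hLpos.le
        _ = |Δ| * L := mul_comm _ _
  refine ⟨hmain, ?_⟩
  intro ε hε hΔ
  calc Real.log ((1 + b ^ γ) / (1 + a ^ γ)) ≤ |Δ| * L := hmain
    _ ≤ (ε / (2 * L)) * L := mul_le_mul_of_nonneg_right hΔ hLpos.le
    _ = ε / 2 := by field_simp
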